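/- Let 0 < t < 1, β > 0 and δ₁ < β be real numbers, and set p₁ = β·(β − 4·δ₁)/(16·t·(1−t)). Define L : [β, ∞) → ℝ by L(x) = ((2x − β − 4δ₁)/(8·t·(1−t)))·√(x² − β·x) − p₁·log((x − β/2 + √(x² − β·x))/(β/2)). Then L(β) = 0, L is differentiable on (β, ∞) with L'(x) = ((x − δ₁)/(2·t·(1−t)))·√((x − β)/x) > 0 for all x > β, and consequently L(x) > 0 for all x > β. -/

import Mathlib

/-- The real part `L` of the boundary values of `λ₁` on
`[β, ∞)` vanishes at `β`, has positive derivative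
`((x − δ₁)/(2t(1−t)))·√((x − β)/x)` on `(β, ∞)`, and hence is positive there. -/
theorem lambda1_positive_on_right (t β δ₁ p₁ : ℝ) (ht0 : 0 < t) (ht1 : t < 1)
    (hβ : 0 < β) (hδ₁ : δ₁ < β)
    (hp₁ : p₁ = β * (β - 4 * δ₁) / (16 * t * (1 - t)))
    (L : ℝ → ℝ)
    (hL : L = fun x => (2 * x - β - 4 * δ₁) / (8 * t * (1 - t)) *
        Real.sqrt (x ^ 2 - β * x) -
        p₁ * Real.log ((x - β / 2 + Real.sqrt (x ^ 2 - β * x)) / (β / 2))) :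
    L β = 0 ∧
    (∀ x : ℝ, β < x →
      HasDerivAt L ((x - δ₁) / (2 * t * (1 - t)) * Real.sqrt ((x - β) / x)) x ∧
      0 < (x - δ₁) / (2 * t * (1 - t)) * Real.sqrt ((x - β) / x)) ∧
    (∀ x : ℝ, β < x → 0 < L x) := by
  have ht1' : 0 < 1 - t := by linarith
  have htt : 0 < t * (1 - t) := mul_pos ht0 ht1'
  have hLβ : L β = 0 := by
    simp only [hL]
    have h1 : β ^ 2 - β * β = 0 := by ring
    rw [h1, Real.sqrt_zero]
    have h2 : (β - β / 2 + 0) / (β / 2) = 1 := by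
      rw [add_zero]
      have : β - β / 2 = β / 2 := by ring
      rw [this, div_self (by positivity)]
    rw [h2, Real.log_one]
    ring
  have key : ∀ x : ℝ, β < x →
      HasDerivAt L ((x - δ₁) / (2 * t * (1 - t)) * Real.sqrt ((x - β) / x)) x := by
    intro x hx
    have hx0 : 0 < x := lt_trans hβ hx
    have hq : 0 < x ^ 2 - β * x := by nlinarith
    set s := Real.sqrt (x ^ 2 - β * x) with hs_def
    have hs0 : 0 < s := Real.sqrt_pos.mpr hq
    have hs2 : s ^ 2 = x ^ 2 - β * x := Real.sq_sqrt hq.le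
    have hpoly : HasDerivAt (fun y : ℝ => y ^ 2 - β * y) (2 * x - β) x := by
      have h1 : HasDerivAt (fun y : ℝ => y ^ 2) (2 * x) x := by
        simpa using hasDerivAt_pow 2 x
      have h2 : HasDerivAt (fun y : ℝ => β * y) β x := by
        simpa using (hasDerivAt_id x).const_mul β
      exact h1.sub h2
    have hsqrt : HasDerivAt (fun y : ℝ => Real.sqrt (y ^ 2 - β * y))
        ((2 * x - β) / (2 * s)) x := hpoly.sqrt (ne_of_gt hq)
    have hf1 : HasDerivAt (fun y : ℝ => (2 * y - β - 4 * δ₁) / (8 * t * (1 - t)))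
        (2 / (8 * t * (1 - t))) x := by
      have : HasDerivAt (fun y : ℝ => 2 * y - β - 4 * δ₁) 2 x := by
        simpa using (((hasDerivAt_id x).const_mul 2).sub_const β).sub_const (4 * δ₁)
      simpa using this.div_const (8 * t * (1 - t))
    have hA : HasDerivAt (fun y : ℝ => (2 * y - β - 4 * δ₁) / (8 * t * (1 - t)) *
        Real.sqrt (y ^ 2 - β * y))
        (2 / (8 * t * (1 - t)) * s +
          (2 * x - β - 4 * δ₁) / (8 * t * (1 - t)) * ((2 * x - β) / (2 * s))) x :=
      hf1.mul hsqrt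
    have hu0 : 0 < x - β / 2 + s := by nlinarith
    have hu : HasDerivAt (fun y : ℝ => (y - β / 2 + Real.sqrt (y ^ 2 - β * y)) / (β / 2))
        ((1 + (2 * x - β) / (2 * s)) / (β / 2)) x := by
      have h : HasDerivAt (fun y : ℝ => y - β / 2 + Real.sqrt (y ^ 2 - β * y))
          (1 + (2 * x - β) / (2 * s)) x := ((hasDerivAt_id x).sub_const (β / 2)).add hsqrt
      exact h.div_const (β / 2)
    have huval : (x - β / 2 + s) / (β / 2) ≠ 0 :=
      ne_of_gt (div_pos hu0 (by positivity))
    have hlog : HasDerivAt (fun y : ℝ =>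
        Real.log ((y - β / 2 + Real.sqrt (y ^ 2 - β * y)) / (β / 2)))
        ((1 + (2 * x - β) / (2 * s)) / (β / 2) / ((x - β / 2 + s) / (β / 2))) x :=
      hu.log huval
    have hlog_simp : (1 + (2 * x - β) / (2 * s)) / (β / 2) / ((x - β / 2 + s) / (β / 2))
        = 1 / s := by
      have h1 : 1 + (2 * x - β) / (2 * s) = (x - β / 2 + s) / s := by
        field_simp; ring
      rw [h1, div_div_div_cancel_right₀, div_div, mul_comm,
        ← div_div, div_self (ne_of_gt hu0)]
      positivity
    have hD : HasDerivAt L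
        (2 / (8 * t * (1 - t)) * s +
          (2 * x - β - 4 * δ₁) / (8 * t * (1 - t)) * ((2 * x - β) / (2 * s)) -
          p₁ * ((1 + (2 * x - β) / (2 * s)) / (β / 2) / ((x - β / 2 + s) / (β / 2)))) x := by
      rw [hL]
      exact hA.sub (hlog.const_mul p₁)
    rw [hlog_simp] at hD
    have hsqrt_eq : Real.sqrt ((x - β) / x) = (x - β) / s := by
      have hnn : 0 ≤ (x - β) / x := div_nonneg (by linarith) hx0.le
      have h1 : (x - β) / x * (x ^ 2 - β * x) = (x - β) ^ 2 := by
        field_simp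
      have h2 : Real.sqrt ((x - β) / x) * s = x - β := by
        rw [hs_def, ← Real.sqrt_mul hnn, h1, Real.sqrt_sq (by linarith)]
      rw [eq_div_iff (ne_of_gt hs0)]
      exact h2
    have heq : 2 / (8 * t * (1 - t)) * s +
          (2 * x - β - 4 * δ₁) / (8 * t * (1 - t)) * ((2 * x - β) / (2 * s)) -
          p₁ * (1 / s)
        = (x - δ₁) / (2 * t * (1 - t)) * ((x - β) / s) := by
      rw [hp₁]
      have h1 : s ≠ 0 := ne_of_gt hs0
      field_simp
      linear_combination 64 * hs2
    rw [hsqrt_eq]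
    rw [heq] at hD
    exact hD
  have hpos : ∀ x : ℝ, β < x →
      0 < (x - δ₁) / (2 * t * (1 - t)) * Real.sqrt ((x - β) / x) := by
    intro x hx
    have hx0 : 0 < x := lt_trans hβ hx
    apply mul_pos
    · exact div_pos (by linarith) (by positivity)
    · exact Real.sqrt_pos.mpr (div_pos (by linarith) hx0)
  refine ⟨hLβ, fun x hx => ⟨key x hx, hpos x hx⟩, ?_⟩
  intro x hx
  have hcont : ContinuousOn L (Set.Ici β) := by
    rw [hL]
    have hc1 : Continuous fun y : ℝ => (2 * y - β - 4 * δ₁) / (8 * t * (1 - t)) :=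
      (((continuous_const.mul continuous_id).sub continuous_const).sub
        continuous_const).div_const _
    have hcp : Continuous fun y : ℝ => y ^ 2 - β * y :=
      (continuous_pow 2).sub (continuous_const.mul continuous_id)
    have hcs : Continuous fun y : ℝ => Real.sqrt (y ^ 2 - β * y) :=
      Real.continuous_sqrt.comp hcp
    apply ContinuousOn.sub
    · exact (hc1.mul hcs).continuousOn
    · apply ContinuousOn.mul continuousOn_const
      apply ContinuousOn.log
      · exact (((continuous_id.sub continuous_const).add hcs).div_const _).continuousOn
      · intro y hy
        simp only [Set.mem_Ici] at hy
        have hsnn := Real.sqrt_nonneg (y ^ 2 - β * y)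
        exact ne_of_gt (div_pos (by linarith) (by positivity))
  have hmono : StrictMonoOn L (Set.Ici β) := by
    apply strictMonoOn_of_deriv_pos (convex_Ici β) hcont
    intro y hy
    rw [interior_Ici] at hy
    rw [(key y hy).deriv]
    exact hpos y hy
  have h := hmono Set.self_mem_Ici (Set.mem_Ici.mpr hx.le) hx
  rwa [hLβ] at h
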